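/- (Hoffman–Wielandt inequality for quaternion Hermitian matrices) Let A, B ∈ ℍ^{m×m} be Hermitian with eigenvalues λ₁(A) ≥ … ≥ λ_m(A) and λ₁(B) ≥ … ≥ λ_m(B). Then Σᵢ (λᵢ(A) − λᵢ(B))² ≤ ‖A − B‖_F², where ‖·‖_F is the Frobenius norm. -/

import Mathlib

open Quaternion Matrix Finset

lemma hw_key (m : ℕ) (s : Fin m → Fin m → ℝ) (a b : Fin m → ℝ)
    (hs : ∀ i j, 0 ≤ s i j)
    (hrow : ∀ i, ∑ j, s i j = 1) (hcol : ∀ j, ∑ i, s i j = 1)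
    (ha : ∀ i j : Fin m, i ≤ j → a j ≤ a i)
    (hb : ∀ i j : Fin m, i ≤ j → b j ≤ b i) :
    ∑ i, ∑ j, s i j * (a i * b j) ≤ ∑ i, a i * b i := by
  classical
  set u : ℕ → Fin m → ℝ := fun k i => if (i:ℕ) ≤ k then 1 else 0 with hu
  set a' : ℕ → ℝ := fun k => if h : k < m then a ⟨k,h⟩ else 0 with ha'
  set b' : ℕ → ℝ := fun k => if h : k < m then b ⟨k,h⟩ else 0 with hb'
  set c : ℕ → ℝ := fun k => a' k - a' (k+1) with hc
  set d : ℕ → ℝ := fun k => b' k - b' (k+1) with hd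
  -- telescoping decomposition
  have tele : ∀ (x : Fin m → ℝ) (x' : ℕ → ℝ), x' = (fun k => if h : k < m then x ⟨k,h⟩ else 0) →
      ∀ i : Fin m, x i = ∑ k ∈ range m, (x' k - x' (k+1)) * u k i := by
    intro x x' hx' i
    have h1 : ∀ k ∈ range m, (x' k - x' (k+1)) * u k i
        = if (i:ℕ) ≤ k then x' k - x' (k+1) else 0 := by
      intro k _; simp only [hu]; split <;> simp
    rw [Finset.sum_congr rfl h1, Finset.sum_ite, Finset.sum_const_zero, add_zero]
    have h2 : Finset.filter (fun k => (i:ℕ) ≤ k) (range m) = Finset.Ico (i:ℕ) m := by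
      ext k; simp [Finset.mem_Ico, Finset.mem_filter, and_comm]
    rw [h2, Finset.sum_Ico_eq_sum_range]
    have h3 : ∑ k ∈ range (m - (i:ℕ)), (x' ((i:ℕ) + k) - x' ((i:ℕ) + k + 1))
        = x' ((i:ℕ) + 0) - x' ((i:ℕ) + (m - (i:ℕ))) := by
      simpa [add_assoc] using Finset.sum_range_sub' (fun k => x' ((i:ℕ) + k)) (m - (i:ℕ))
    simp only [h3]
    have h4 : (i:ℕ) + (m - (i:ℕ)) = m := by omega
    rw [h4]
    simp [hx', i.isLt]
  have decompa := tele a a' ha'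
  have decompb := tele b b' hb'
  -- bilinear expansion
  have exp1 : ∑ i, a i * b i
      = ∑ k ∈ range m, ∑ l ∈ range m, c k * d l * (∑ i, u k i * u l i) := by
    calc ∑ i, a i * b i
        = ∑ i, ∑ k ∈ range m, ∑ l ∈ range m, (c k * u k i) * (d l * u l i) := by
          refine Finset.sum_congr rfl fun i _ => ?_
          rw [decompa i, decompb i, Finset.sum_mul_sum]
      _ = ∑ k ∈ range m, ∑ l ∈ range m, ∑ i, (c k * u k i) * (d l * u l i) := by
          rw [Finset.sum_comm]
          exact Finset.sum_congr rfl fun k _ => by rw [Finset.sum_comm]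
      _ = ∑ k ∈ range m, ∑ l ∈ range m, c k * d l * (∑ i, u k i * u l i) := by
          refine Finset.sum_congr rfl fun k _ => Finset.sum_congr rfl fun l _ => ?_
          rw [Finset.mul_sum]
          exact Finset.sum_congr rfl fun i _ => by ring
  have exp2 : ∑ i, ∑ j, s i j * (a i * b j)
      = ∑ k ∈ range m, ∑ l ∈ range m, c k * d l * (∑ i, ∑ j, s i j * (u k i * u l j)) := by
    calc ∑ i, ∑ j, s i j * (a i * b j)
        = ∑ i, ∑ j, ∑ k ∈ range m, ∑ l ∈ range m, s i j * ((c k * u k i) * (d l * u l j)) := by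
          refine Finset.sum_congr rfl fun i _ => Finset.sum_congr rfl fun j _ => ?_
          rw [decompa i, decompb j, Finset.sum_mul_sum, Finset.mul_sum]
          exact Finset.sum_congr rfl fun k _ => by rw [Finset.mul_sum]
      _ = ∑ k ∈ range m, ∑ l ∈ range m, ∑ i, ∑ j, s i j * ((c k * u k i) * (d l * u l j)) := by
          calc ∑ i, ∑ j, ∑ k ∈ range m, ∑ l ∈ range m, s i j * ((c k * u k i) * (d l * u l j))
              = ∑ i, ∑ k ∈ range m, ∑ l ∈ range m, ∑ j, s i j * ((c k * u k i) * (d l * u l j)) := by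
                refine Finset.sum_congr rfl fun i _ => ?_
                rw [Finset.sum_comm]
                exact Finset.sum_congr rfl fun k _ => by rw [Finset.sum_comm]
            _ = ∑ k ∈ range m, ∑ l ∈ range m, ∑ i, ∑ j, s i j * ((c k * u k i) * (d l * u l j)) := by
                rw [Finset.sum_comm]
                exact Finset.sum_congr rfl fun k _ => by rw [Finset.sum_comm]
      _ = ∑ k ∈ range m, ∑ l ∈ range m, c k * d l * (∑ i, ∑ j, s i j * (u k i * u l j)) := by
          refine Finset.sum_congr rfl fun k _ => Finset.sum_congr rfl fun l _ => ?_
          rw [Finset.mul_sum]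
          refine Finset.sum_congr rfl fun i _ => ?_
          rw [Finset.mul_sum]
          exact Finset.sum_congr rfl fun j _ => by ring
  rw [exp1, exp2]
  -- termwise comparison
  refine Finset.sum_le_sum fun k hk => Finset.sum_le_sum fun l hl => ?_
  set P : ℝ := ∑ i, u k i * u l i with hP
  set Q : ℝ := ∑ i, ∑ j, s i j * (u k i * u l j) with hQ
  have hu01 : ∀ k (i : Fin m), 0 ≤ u k i ∧ u k i ≤ 1 := by
    intro k i; simp only [hu]; split <;> norm_num
  have hQP : Q ≤ P := by
    rcases le_total k l with hkl | hkl
    · have hPeq : P = ∑ i, u k i := by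
        refine Finset.sum_congr rfl fun i _ => ?_
        simp only [hu]
        by_cases h : (i:ℕ) ≤ k
        · rw [if_pos h, if_pos (le_trans h hkl), mul_one]
        · rw [if_neg h, zero_mul]
      rw [hPeq]
      calc Q ≤ ∑ i, ∑ j, s i j * u k i := by
            refine Finset.sum_le_sum fun i _ => Finset.sum_le_sum fun j _ => ?_
            have h1 := (hu01 l j).2
            have h0 := (hu01 k i).1
            exact mul_le_mul_of_nonneg_left (mul_le_of_le_one_right h0 h1) (hs i j)
        _ = ∑ i, u k i := by
            refine Finset.sum_congr rfl fun i _ => ?_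
            rw [← Finset.sum_mul, hrow i, one_mul]
    · have hPeq : P = ∑ i, u l i := by
        refine Finset.sum_congr rfl fun i _ => ?_
        simp only [hu]
        by_cases h : (i:ℕ) ≤ l
        · rw [if_pos h, if_pos (le_trans h hkl), one_mul]
        · rw [if_neg h, mul_zero]
      rw [hPeq, hQ, Finset.sum_comm]
      calc ∑ j, ∑ i, s i j * (u k i * u l j) ≤ ∑ j : Fin m, ∑ i, s i j * u l j := by
            refine Finset.sum_le_sum fun j _ => Finset.sum_le_sum fun i _ => ?_
            have h1 := (hu01 k i).2
            have h0 := (hu01 l j).1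
            exact mul_le_mul_of_nonneg_left (mul_le_of_le_one_left h0 h1) (hs i j)
        _ = ∑ j, u l j := by
            refine Finset.sum_congr rfl fun j _ => ?_
            rw [← Finset.sum_mul, hcol j, one_mul]
  by_cases hk1 : k + 1 < m
  · by_cases hl1 : l + 1 < m
    · -- both interior: c k, d l ≥ 0
      have hck : 0 ≤ c k := by
        simp only [hc, ha', dif_pos (Finset.mem_range.mp hk), dif_pos hk1, sub_nonneg]
        exact ha ⟨k, Finset.mem_range.mp hk⟩ ⟨k+1, hk1⟩ (by simp [Fin.le_def])
      have hdl : 0 ≤ d l := by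
        simp only [hd, hb', dif_pos (Finset.mem_range.mp hl), dif_pos hl1, sub_nonneg]
        exact hb ⟨l, Finset.mem_range.mp hl⟩ ⟨l+1, hl1⟩ (by simp [Fin.le_def])
      exact mul_le_mul_of_nonneg_left hQP (mul_nonneg hck hdl)
    · -- l = m-1 : u l = 1, P = Q
      have hul : ∀ j : Fin m, u l j = 1 := by
        intro j; simp only [hu]; rw [if_pos]; omega
      have hPQ : P = Q := by
        rw [hP, hQ]
        refine Finset.sum_congr rfl fun i _ => ?_
        simp only [hul, mul_one]
        rw [← Finset.sum_mul, hrow i, one_mul]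
      rw [hPQ]
  · -- k = m-1 : u k = 1, P = Q
    have huk : ∀ i : Fin m, u k i = 1 := by
      intro i; simp only [hu]; rw [if_pos]; have := Finset.mem_range.mp hk; omega
    have hPQ : P = Q := by
      rw [hP, hQ, Finset.sum_comm]
      refine Finset.sum_congr rfl fun i _ => ?_
      simp only [huk, one_mul]
      rw [← Finset.sum_mul, hcol i, one_mul]
    rw [hPQ]


lemma hw_re_sum {α : Type*} (s : Finset α) (f : α → ℍ[ℝ]) :
    (∑ x ∈ s, f x).re = ∑ x ∈ s, (f x).re :=
  map_sum (AddMonoidHom.mk' (fun q : ℍ[ℝ] => q.re) (fun _ _ => rfl)) f s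

lemma hw_retrace_comm {n : Type*} [Fintype n] (X Y : Matrix n n ℍ[ℝ]) :
    (Matrix.trace (X * Y)).re = (Matrix.trace (Y * X)).re := by
  simp only [Matrix.trace, Matrix.diag, Matrix.mul_apply, hw_re_sum]
  rw [Finset.sum_comm]
  refine Finset.sum_congr rfl fun i _ => Finset.sum_congr rfl fun j _ => ?_
  simp only [Quaternion.re_mul]
  ring

lemma hw_frob_trace {n : Type*} [Fintype n] (N : Matrix n n ℍ[ℝ]) :
    (Matrix.trace (Nᴴ * N)).re = ∑ i, ∑ j, ‖N i j‖ ^ 2 := by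
  simp only [Matrix.trace, Matrix.diag, Matrix.mul_apply, hw_re_sum,
    Matrix.conjTranspose_apply]
  rw [Finset.sum_comm]
  refine Finset.sum_congr rfl fun i _ => Finset.sum_congr rfl fun j _ => ?_
  rw [Quaternion.star_mul_self]
  rw [show ((normSq (N i j) : ℝ) : ℍ[ℝ]).re = normSq (N i j) from rfl]
  rw [Quaternion.normSq_eq_norm_mul_self, sq]

/-- Hoffman–Wielandt inequality for quaternion Hermitian matrices:
`∑ᵢ (λᵢ(A) − λᵢ(B))² ≤ ‖A − B‖_F²`. -/
theorem quaternion_hoffman_wielandt (m : ℕ)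
    (A B U V : Matrix (Fin m) (Fin m) ℍ[ℝ]) (lamA lamB : Fin m → ℝ)
    (hAh : A.IsHermitian) (hBh : B.IsHermitian)
    (hU : Uᴴ * U = 1 ∧ U * Uᴴ = 1) (hV : Vᴴ * V = 1 ∧ V * Vᴴ = 1)
    (hlamA : ∀ i j : Fin m, i ≤ j → lamA j ≤ lamA i)
    (hlamB : ∀ i j : Fin m, i ≤ j → lamB j ≤ lamB i)
    (hAdiag : A = U * Matrix.diagonal (fun i => (lamA i : ℍ[ℝ])) * Uᴴ)
    (hBdiag : B = V * Matrix.diagonal (fun i => (lamB i : ℍ[ℝ])) * Vᴴ) :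
    ∑ i, (lamA i - lamB i) ^ 2 ≤ ∑ i, ∑ j, ‖(A - B) i j‖ ^ 2 := by
  classical
  set M : Matrix (Fin m) (Fin m) ℍ[ℝ] := A - B with hM
  set W : Matrix (Fin m) (Fin m) ℍ[ℝ] := Uᴴ * V with hWdef
  have hW1 : Wᴴ * W = 1 := by
    rw [hWdef, conjTranspose_mul, conjTranspose_conjTranspose]
    calc Vᴴ * U * (Uᴴ * V) = Vᴴ * (U * Uᴴ * V) := by
          rw [Matrix.mul_assoc, Matrix.mul_assoc]
      _ = 1 := by rw [hU.2, Matrix.one_mul, hV.1]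
  have hW2 : W * Wᴴ = 1 := by
    rw [hWdef, conjTranspose_mul, conjTranspose_conjTranspose]
    calc Uᴴ * V * (Vᴴ * U) = Uᴴ * (V * Vᴴ * U) := by
          rw [Matrix.mul_assoc, Matrix.mul_assoc]
      _ = 1 := by rw [hV.2, Matrix.one_mul, hU.1]
  set s : Fin m → Fin m → ℝ := fun i j => ‖W i j‖ ^ 2 with hsdef
  have hnormsq : ∀ (q : ℍ[ℝ]), (q * star q).re = ‖q‖ ^ 2 := by
    intro q
    rw [Quaternion.self_mul_star, show ((normSq q : ℝ) : ℍ[ℝ]).re = normSq q from rfl,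
      Quaternion.normSq_eq_norm_mul_self, sq]
  have hnormsq' : ∀ (q : ℍ[ℝ]), (star q * q).re = ‖q‖ ^ 2 := by
    intro q
    rw [Quaternion.star_mul_self, show ((normSq q : ℝ) : ℍ[ℝ]).re = normSq q from rfl,
      Quaternion.normSq_eq_norm_mul_self, sq]
  have hs : ∀ i j, 0 ≤ s i j := fun i j => pow_nonneg (norm_nonneg _) 2
  have hrow : ∀ i, ∑ j, s i j = 1 := by
    intro i
    have h := congrArg (fun X : Matrix (Fin m) (Fin m) ℍ[ℝ] => (X i i).re) hW2
    simp only [Matrix.mul_apply, Matrix.conjTranspose_apply, Matrix.one_apply_eq] at h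
    rw [hw_re_sum] at h
    simp only [hnormsq] at h
    simpa using h
  have hcol : ∀ j, ∑ i, s i j = 1 := by
    intro j
    have h := congrArg (fun X : Matrix (Fin m) (Fin m) ℍ[ℝ] => (X j j).re) hW1
    simp only [Matrix.mul_apply, Matrix.conjTranspose_apply, Matrix.one_apply_eq] at h
    rw [hw_re_sum] at h
    simp only [hnormsq'] at h
    simpa using h
  -- Frobenius invariance
  have hfrob : ∑ i, ∑ j, ‖M i j‖ ^ 2 = ∑ i, ∑ j, ‖(Uᴴ * M * V) i j‖ ^ 2 := by
    rw [← hw_frob_trace, ← hw_frob_trace]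
    have h1 : (Uᴴ * M * V)ᴴ * (Uᴴ * M * V) = Vᴴ * ((Mᴴ * M) * V) := by
      simp only [conjTranspose_mul, conjTranspose_conjTranspose, Matrix.mul_assoc]
      rw [show U * (Uᴴ * (M * V)) = M * V from by
        rw [← Matrix.mul_assoc, hU.2, Matrix.one_mul]]
    rw [h1, hw_retrace_comm Vᴴ ((Mᴴ * M) * V), Matrix.mul_assoc (Mᴴ * M) V Vᴴ, hV.2,
      Matrix.mul_one]
  -- entries of the conjugated difference
  have hUAV : Uᴴ * A * V = Matrix.diagonal (fun i => (lamA i : ℍ[ℝ])) * W := by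
    rw [hAdiag, hWdef]
    calc Uᴴ * (U * Matrix.diagonal (fun i => (lamA i : ℍ[ℝ])) * Uᴴ) * V
        = (Uᴴ * U) * (Matrix.diagonal (fun i => (lamA i : ℍ[ℝ])) * (Uᴴ * V)) := by
          simp only [Matrix.mul_assoc]
      _ = Matrix.diagonal (fun i => (lamA i : ℍ[ℝ])) * (Uᴴ * V) := by
          rw [hU.1, Matrix.one_mul]
  have hUBV : Uᴴ * B * V = W * Matrix.diagonal (fun i => (lamB i : ℍ[ℝ])) := by
    rw [hBdiag, hWdef]
    calc Uᴴ * (V * Matrix.diagonal (fun i => (lamB i : ℍ[ℝ])) * Vᴴ) * V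
        = (Uᴴ * V) * (Matrix.diagonal (fun i => (lamB i : ℍ[ℝ])) * (Vᴴ * V)) := by
          simp only [Matrix.mul_assoc]
      _ = (Uᴴ * V) * Matrix.diagonal (fun i => (lamB i : ℍ[ℝ])) := by
          rw [hV.1, Matrix.mul_one]
  have hMent : ∀ i j, (Uᴴ * M * V) i j = ((lamA i - lamB j : ℝ) : ℍ[ℝ]) * W i j := by
    intro i j
    have hsplit : Uᴴ * M * V = Uᴴ * A * V - Uᴴ * B * V := by
      rw [hM, Matrix.mul_sub, Matrix.sub_mul]
    rw [hsplit, hUAV, hUBV, Matrix.sub_apply, Matrix.diagonal_mul, Matrix.mul_diagonal,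
      ← Quaternion.coe_commutes, ← sub_mul, ← Quaternion.coe_sub]
  have hRHS : ∑ i, ∑ j, ‖(Uᴴ * M * V) i j‖ ^ 2
      = ∑ i, ∑ j, (lamA i - lamB j) ^ 2 * s i j := by
    refine Finset.sum_congr rfl fun i _ => Finset.sum_congr rfl fun j _ => ?_
    rw [hMent i j, norm_mul, Quaternion.norm_coe, Real.norm_eq_abs, mul_pow, sq_abs, hsdef]
  rw [show ∑ i, ∑ j, ‖(A - B) i j‖ ^ 2 = ∑ i, ∑ j, ‖M i j‖ ^ 2 from rfl, hfrob, hRHS]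
  -- now the real inequality
  have key := hw_key m s lamA lamB hs hrow hcol hlamA hlamB
  have e1 : ∑ i, ∑ j, s i j * (lamA i) ^ 2 = ∑ i, (lamA i) ^ 2 := by
    refine Finset.sum_congr rfl fun i _ => ?_
    rw [← Finset.sum_mul, hrow i, one_mul]
  have e2 : ∑ i, ∑ j, s i j * (lamB j) ^ 2 = ∑ j, (lamB j) ^ 2 := by
    rw [Finset.sum_comm]
    refine Finset.sum_congr rfl fun j _ => ?_
    rw [← Finset.sum_mul, hcol j, one_mul]
  have e3 : ∑ i, ∑ j, (lamA i - lamB j) ^ 2 * s i j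
      = ∑ i, ∑ j, s i j * (lamA i) ^ 2
        - 2 * ∑ i, ∑ j, s i j * (lamA i * lamB j)
        + ∑ i, ∑ j, s i j * (lamB j) ^ 2 := by
    have h : ∀ i j : Fin m, (lamA i - lamB j) ^ 2 * s i j
        = s i j * (lamA i) ^ 2 - 2 * (s i j * (lamA i * lamB j)) + s i j * (lamB j) ^ 2 := by
      intro i j; ring
    simp only [h, Finset.sum_add_distrib, Finset.sum_sub_distrib, ← Finset.mul_sum]
  have e4 : ∑ i, (lamA i - lamB i) ^ 2
      = ∑ i, (lamA i) ^ 2 - 2 * ∑ i, lamA i * lamB i + ∑ i, (lamB i) ^ 2 := by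
    have h : ∀ i : Fin m, (lamA i - lamB i) ^ 2
        = (lamA i) ^ 2 - 2 * (lamA i * lamB i) + (lamB i) ^ 2 := by intro i; ring
    simp only [h, Finset.sum_add_distrib, Finset.sum_sub_distrib, ← Finset.mul_sum]
  rw [e3, e1, e2, e4]
  linarith
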